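/- Let 1 → N → G → H be an exact sequence of groups (N a normal subgroup of G with G/N embedding into H). If N is T-Jordan and H has bounded torsion subgroups, then G is T-Jordan. -/

import Mathlib

/-- A group `G` is *T-Jordan* if there is a constant `J` such that every torsion
subgroup of `G` contains an abelian subgroup of index at most `J`. -/
def TJordan (G : Type*) [Group G] : Prop :=
  ∃ J : ℕ, ∀ H : Subgroup G, Monoid.IsTorsion H →
    ∃ A : Subgroup H, A.index ≠ 0 ∧ A.index ≤ J ∧ ∀ x ∈ A, ∀ y ∈ A, x * y = y * x

/-- A group `G` has *bounded torsion subgroups* if there is a constant `T` such that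
every torsion subgroup of `G` has order at most `T`. -/
def BoundedTorsionSubgroups (G : Type*) [Group G] : Prop :=
  ∃ T : ℕ, ∀ H : Subgroup G, Monoid.IsTorsion H →
    (H : Set G).Finite ∧ Nat.card H ≤ T

private lemma aux_finOrder_mk {G : Type*} [Group G] (K : Subgroup G) (x : G) (hx : x ∈ K)
    (h : IsOfFinOrder x) : IsOfFinOrder (⟨x, hx⟩ : K) := by
  rw [← orderOf_pos_iff, ← orderOf_injective K.subtype Subtype.coe_injective ⟨x, hx⟩]
  exact orderOf_pos_iff.mpr h

private lemma aux_finOrder_of_mk {G : Type*} [Group G] (K : Subgroup G) (x : G) (hx : x ∈ K)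
    (h : IsOfFinOrder (⟨x, hx⟩ : K)) : IsOfFinOrder x := by
  rw [← orderOf_pos_iff] at h ⊢
  exact lt_of_lt_of_eq h (orderOf_injective K.subtype Subtype.coe_injective ⟨x, hx⟩).symm

/-- If `1 → N → G → H` is an exact sequence of groups, `N` is T-Jordan and `H` has
bounded torsion subgroups, then `G` is T-Jordan. -/
theorem tJordan_of_exact_sequence {N G H : Type*} [Group N] [Group G] [Group H]
    (f : N →* G) (g : G →* H) (hf : Function.Injective f)
    (hexact : g.ker = f.range)
    (hN : TJordan N) (hH : BoundedTorsionSubgroups H) : TJordan G := by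
  obtain ⟨J, hJ⟩ := hN
  obtain ⟨T, hT⟩ := hH
  refine ⟨J * T, fun K hK => ?_⟩
  -- the image of K under g is torsion
  have hKg : Monoid.IsTorsion ↥(K.map g) := by
    rintro ⟨y, x, hx, rfl⟩
    have h1 : IsOfFinOrder x := aux_finOrder_of_mk K x hx (hK ⟨x, hx⟩)
    exact aux_finOrder_mk _ _ _ (g.isOfFinOrder h1)
  obtain ⟨hfin, hcard⟩ := hT (K.map g) hKg
  -- the preimage of K under f is torsion
  set N' : Subgroup N := K.comap f with hN'def
  have hN' : Monoid.IsTorsion ↥N' := by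
    rintro ⟨a, ha⟩
    have h1 : IsOfFinOrder (⟨f a, ha⟩ : K) := hK _
    have h2 : IsOfFinOrder (f a) := aux_finOrder_of_mk K (f a) ha h1
    have h3 : IsOfFinOrder a := by
      rw [← orderOf_pos_iff, ← orderOf_injective f hf a, orderOf_pos_iff]
      exact h2
    exact aux_finOrder_mk _ _ _ h3
  obtain ⟨A, hA0, hAJ, hAcomm⟩ := hJ N' hN'
  set L : Subgroup G := g.ker ⊓ K with hLdef
  have hLK : L ≤ K := inf_le_right
  have hNL : N'.map f = L := by
    rw [hN'def, Subgroup.map_comap_eq, hLdef, hexact]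
  set AG : Subgroup G := (A.map N'.subtype).map f with hAGdef
  have hAGL : AG ≤ L := by
    rw [← hNL]
    exact Subgroup.map_mono (Subgroup.map_subtype_le A)
  have h1 : AG.relIndex L = A.index := by
    have : AG.comap f = A.map N'.subtype := by
      rw [hAGdef, Subgroup.comap_map_eq_self_of_injective hf]
    calc AG.relIndex L = (AG.comap f).relIndex N' := by
          rw [Subgroup.relIndex_comap, hNL]
      _ = (A.map N'.subtype).relIndex N' := by rw [this]
      _ = A.index := by
          rw [Subgroup.relIndex, Subgroup.subgroupOf,
            Subgroup.comap_map_eq_self_of_injective N'.subtype_injective]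
  have h2 : L.relIndex K = Nat.card ↥(K.map g) := by
    rw [hLdef, Subgroup.inf_relIndex_right, Subgroup.relIndex_ker]
  have hcardpos : 0 < Nat.card ↥(K.map g) := by
    have : Finite ↥(K.map g) := hfin.to_subtype
    exact Nat.card_pos
  have hrel : AG.relIndex K = A.index * Nat.card ↥(K.map g) := by
    rw [← Subgroup.relIndex_mul_relIndex AG L K hAGL hLK, h1, h2]
  refine ⟨AG.subgroupOf K, ?_, ?_, ?_⟩
  · show AG.relIndex K ≠ 0
    rw [hrel]
    exact Nat.mul_ne_zero hA0 hcardpos.ne'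
  · show AG.relIndex K ≤ J * T
    rw [hrel]
    exact Nat.mul_le_mul hAJ hcard
  · rintro x hx y hy
    obtain ⟨a', ha', hax⟩ := hx
    obtain ⟨a, ha, rfl⟩ := ha'
    obtain ⟨b', hb', hby⟩ := hy
    obtain ⟨b, hb, rfl⟩ := hb'
    have hab : a * b = b * a := hAcomm a ha b hb
    have hax' : f (a : N) = (x : G) := hax
    have hby' : f (b : N) = (y : G) := hby
    ext
    show (x : G) * y = (y : G) * x
    calc (x : G) * y = f ((a : N) * b) := by rw [map_mul, hax', hby']
      _ = f (((a * b : N') : N)) := by norm_cast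
      _ = f (((b * a : N') : N)) := by rw [hab]
      _ = f ((b : N) * a) := by norm_cast
      _ = (y : G) * x := by rw [map_mul, hax', hby']
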